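/- Let A be a symplectic 2n×2n real matrix and let the perturbed matrix Â = A + E satisfy ‖E‖₂ ≤ ε‖A‖₂ with 0 < ε < 1. Then Δ(Â) = ‖ÂᵀJÂ − J‖₂ ≤ ‖Â‖₂² · (2ε + ε²)/(1 − ε)². -/

import Mathlib

set_option maxHeartbeats 1000000

open Matrix
open scoped Matrix.Norms.L2Operator

/-- The standard symplectic matrix `J = [[0, I], [-I, 0]]`. -/
noncomputable def symplJ (n : ℕ) : Matrix (Fin n ⊕ Fin n) (Fin n ⊕ Fin n) ℝ :=
  Matrix.fromBlocks 0 1 (-1) 0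

lemma symplJ_transpose_mul_self (n : ℕ) : (symplJ n)ᵀ * symplJ n = 1 := by
  simp [symplJ, Matrix.fromBlocks_transpose, Matrix.fromBlocks_multiply,
    Matrix.fromBlocks_one]

lemma norm_one_le (n : ℕ) : ‖(1 : Matrix (Fin n ⊕ Fin n) (Fin n ⊕ Fin n) ℝ)‖ ≤ 1 := by
  rw [Matrix.cstar_norm_def, _root_.map_one]
  exact ContinuousLinearMap.norm_id_le

lemma norm_symplJ_le (n : ℕ) : ‖symplJ n‖ ≤ 1 := by
  have h : ‖symplJ n‖ * ‖symplJ n‖ = ‖(1 : Matrix (Fin n ⊕ Fin n) (Fin n ⊕ Fin n) ℝ)‖ := by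
    rw [← symplJ_transpose_mul_self n]
    have : (symplJ n)ᴴ = (symplJ n)ᵀ := Matrix.conjTranspose_eq_transpose_of_trivial _
    rw [← this, Matrix.l2_opNorm_conjTranspose_mul_self]
  nlinarith [norm_one_le n, norm_nonneg (symplJ n)]

/-- If `A` is symplectic and `‖E‖₂ ≤ ε ‖A‖₂` with `0 < ε < 1`, then for `Â = A + E` we
have `Δ(Â) = ‖Âᵀ J Â − J‖₂ ≤ ‖Â‖₂² (2ε + ε²)/(1 − ε)²`. -/
theorem loss_of_symplecticity_relative_perturbation_bound (n : ℕ)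
    (A E : Matrix (Fin n ⊕ Fin n) (Fin n ⊕ Fin n) ℝ)
    (hsympl : Aᵀ * symplJ n * A = symplJ n)
    (ε : ℝ) (hε0 : 0 < ε) (hε1 : ε < 1)
    (hE : ‖E‖ ≤ ε * ‖A‖) :
    ‖(A + E)ᵀ * symplJ n * (A + E) - symplJ n‖ ≤
      ‖A + E‖ ^ 2 * (2 * ε + ε ^ 2) / (1 - ε) ^ 2 := by
  set J := symplJ n
  have hJ : ‖J‖ ≤ 1 := norm_symplJ_le n
  have hA0 : (0:ℝ) ≤ ‖A‖ := norm_nonneg _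
  have hAE0 : (0:ℝ) ≤ ‖A + E‖ := norm_nonneg _
  have hT : ‖Aᵀ‖ = ‖A‖ := by
    rw [← Matrix.conjTranspose_eq_transpose_of_trivial, Matrix.l2_opNorm_conjTranspose]
  have hET : ‖Eᵀ‖ = ‖E‖ := by
    rw [← Matrix.conjTranspose_eq_transpose_of_trivial, Matrix.l2_opNorm_conjTranspose]
  have hexp : (A + E)ᵀ * J * (A + E) - J = Aᵀ * J * E + Eᵀ * J * A + Eᵀ * J * E := by
    rw [Matrix.transpose_add, Matrix.add_mul, Matrix.add_mul, Matrix.mul_add, Matrix.mul_add,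
      hsympl]
    abel
  have hE0 : (0:ℝ) ≤ ‖E‖ := norm_nonneg _
  have b1 : ‖Aᵀ * J * E‖ ≤ ‖A‖ * ‖E‖ := by
    calc ‖Aᵀ * J * E‖ ≤ ‖Aᵀ * J‖ * ‖E‖ := norm_mul_le _ _
    _ ≤ ‖Aᵀ‖ * ‖J‖ * ‖E‖ := mul_le_mul_of_nonneg_right (norm_mul_le _ _) (norm_nonneg _)
    _ ≤ ‖A‖ * 1 * ‖E‖ := by
        rw [hT]
        exact mul_le_mul_of_nonneg_right (mul_le_mul_of_nonneg_left hJ hA0) (norm_nonneg _)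
    _ = ‖A‖ * ‖E‖ := by ring
  have b2 : ‖Eᵀ * J * A‖ ≤ ‖E‖ * ‖A‖ := by
    calc ‖Eᵀ * J * A‖ ≤ ‖Eᵀ * J‖ * ‖A‖ := norm_mul_le _ _
    _ ≤ ‖Eᵀ‖ * ‖J‖ * ‖A‖ := mul_le_mul_of_nonneg_right (norm_mul_le _ _) (norm_nonneg _)
    _ ≤ ‖E‖ * 1 * ‖A‖ := by
        rw [hET]
        exact mul_le_mul_of_nonneg_right (mul_le_mul_of_nonneg_left hJ hE0) (norm_nonneg _)
    _ = ‖E‖ * ‖A‖ := by ring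
  have b3 : ‖Eᵀ * J * E‖ ≤ ‖E‖ * ‖E‖ := by
    calc ‖Eᵀ * J * E‖ ≤ ‖Eᵀ * J‖ * ‖E‖ := norm_mul_le _ _
    _ ≤ ‖Eᵀ‖ * ‖J‖ * ‖E‖ := mul_le_mul_of_nonneg_right (norm_mul_le _ _) (norm_nonneg _)
    _ ≤ ‖E‖ * 1 * ‖E‖ := by
        rw [hET]
        exact mul_le_mul_of_nonneg_right (mul_le_mul_of_nonneg_left hJ hE0) (norm_nonneg _)
    _ = ‖E‖ * ‖E‖ := by ring
  have key : ‖(A + E)ᵀ * J * (A + E) - J‖ ≤ (2 * ε + ε ^ 2) * ‖A‖ ^ 2 := by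
    rw [hexp]
    calc ‖Aᵀ * J * E + Eᵀ * J * A + Eᵀ * J * E‖
        ≤ ‖Aᵀ * J * E‖ + ‖Eᵀ * J * A‖ + ‖Eᵀ * J * E‖ := norm_add₃_le
    _ ≤ ‖A‖ * ‖E‖ + ‖E‖ * ‖A‖ + ‖E‖ * ‖E‖ := add_le_add (add_le_add b1 b2) b3
    _ ≤ (2 * ε + ε ^ 2) * ‖A‖ ^ 2 := by nlinarith
  have hlow : (1 - ε) * ‖A‖ ≤ ‖A + E‖ := by
    have : ‖A‖ ≤ ‖A + E‖ + ‖E‖ := by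
      calc ‖A‖ = ‖(A + E) + (-E)‖ := by rw [add_neg_cancel_right]
      _ ≤ ‖A + E‖ + ‖-E‖ := norm_add_le _ _
      _ = ‖A + E‖ + ‖E‖ := by rw [norm_neg]
    nlinarith
  have hle : 0 ≤ (1 - ε) * ‖A‖ := mul_nonneg (by linarith) hA0
  have h2 : ((1 - ε) * ‖A‖) ^ 2 ≤ ‖A + E‖ ^ 2 := pow_le_pow_left₀ hle hlow 2
  calc ‖(A + E)ᵀ * J * (A + E) - J‖ ≤ (2 * ε + ε ^ 2) * ‖A‖ ^ 2 := key
  _ ≤ ‖A + E‖ ^ 2 * (2 * ε + ε ^ 2) / (1 - ε) ^ 2 := by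
      rw [le_div_iff₀ (pow_pos (by linarith : (0:ℝ) < 1 - ε) 2)]
      nlinarith [mul_le_mul_of_nonneg_left h2 (show (0:ℝ) ≤ 2 * ε + ε ^ 2 by positivity)]
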